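/- For every ε > 0 there exists a constant C > 0 such that for all z₀ > 0, all real t ≥ 1, and all complex numbers z, ∫_0^{∞} ∫_{v+z₀}^{∞} ( (u − z₀)² + v² )^{−1/4} · e^{−tεv/2} · |u + iv − z|^{−1} du dv ≤ C t^{−1/2}. -/

import Mathlib

open MeasureTheory Set Real Filter

-- Young: a*b ≤ a^3 + b*sqrt b
lemma young3 (a b : ℝ) (ha : 0 ≤ a) (hb : 0 ≤ b) : a * b ≤ a ^ 3 + b * Real.sqrt b := by
  rcases le_total b (a ^ 2) with h | h
  · have hsb : Real.sqrt b ≤ a := by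
      calc Real.sqrt b ≤ Real.sqrt (a ^ 2) := Real.sqrt_le_sqrt h
        _ = a := Real.sqrt_sq ha
    have h2 : Real.sqrt b * Real.sqrt b = b := Real.mul_self_sqrt hb
    nlinarith [Real.sqrt_nonneg b]
  · have hsb : a ≤ Real.sqrt b := (Real.le_sqrt ha hb).mpr h
    have h2 : Real.sqrt b * Real.sqrt b = b := Real.mul_self_sqrt hb
    nlinarith [Real.sqrt_nonneg b, Real.sqrt_nonneg b]

lemma core (X Y : ℝ) (hX : 0 < X) (hY : 0 < Y) :
    X ^ (-(1/4):ℝ) * Y ^ (-(1/2):ℝ) ≤ X ^ (-(3/4):ℝ) + Y ^ (-(3/4):ℝ) := by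
  have h := young3 (X ^ (-(1/4):ℝ)) (Y ^ (-(1/2):ℝ))
    (Real.rpow_nonneg hX.le _) (Real.rpow_nonneg hY.le _)
  have h1 : (X ^ (-(1/4):ℝ)) ^ (3:ℕ) = X ^ (-(3/4):ℝ) := by
    rw [← Real.rpow_natCast (X ^ (-(1/4):ℝ)) 3, ← Real.rpow_mul hX.le]; norm_num
  have h2 : Real.sqrt (Y ^ (-(1/2):ℝ)) = Y ^ (-(1/4):ℝ) := by
    rw [Real.sqrt_eq_rpow, ← Real.rpow_mul hY.le]; norm_num
  have h3 : Y ^ (-(1/2):ℝ) * Y ^ (-(1/4):ℝ) = Y ^ (-(3/4):ℝ) := by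
    rw [← Real.rpow_add hY]; norm_num
  rw [h1, h2, h3] at h; exact h

lemma pw (X Y E : ℝ) (hX : 0 ≤ X) (hY : 0 ≤ Y) (hE : 0 ≤ E) :
    X ^ (-(1/4):ℝ) * E / Real.sqrt Y ≤ E * X ^ (-(3/4):ℝ) + E * Y ^ (-(3/4):ℝ) := by
  rcases eq_or_lt_of_le hX with hX0 | hX
  · rw [← hX0]
    rw [Real.zero_rpow (by norm_num)]
    simp only [zero_mul, zero_div]
    positivity
  rcases eq_or_lt_of_le hY with hY0 | hY
  · rw [← hY0]
    simp only [Real.sqrt_zero, div_zero]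
    positivity
  have key : X ^ (-(1/4):ℝ) * E / Real.sqrt Y
      = E * (X ^ (-(1/4):ℝ) * Y ^ (-(1/2):ℝ)) := by
    rw [Real.sqrt_eq_rpow, Real.rpow_neg hY.le, div_eq_mul_inv]; ring
  rw [key, ← mul_add]
  exact mul_le_mul_of_nonneg_left (core X Y hX hY) hE

noncomputable def Kc : ℝ := ∫ s : ℝ, ((1:ℝ) + s^2) ^ (-(3/4):ℝ)

lemma K_int : Integrable (fun s : ℝ => ((1:ℝ) + s^2) ^ (-(3/4):ℝ)) := by
  have hcont : Continuous fun s : ℝ => ((1:ℝ) + s^2) ^ (-(3/4):ℝ) := by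
    apply Continuous.rpow_const (by continuity)
    intro x; left; positivity
  refine ((integrable_one_add_norm (E := ℝ) (r := 3/2)
    (by simp only [Module.finrank_self, Nat.cast_one]; norm_num)).const_mul ((2:ℝ) ^ ((3:ℝ)/4))).mono' hcont.aestronglyMeasurable ?_
  filter_upwards with s
  have h0 : (0:ℝ) < 1 + s^2 := by positivity
  have h1 : (0:ℝ) < 1 + ‖s‖ := by positivity
  have hsq : (1 + ‖s‖)^2 ≤ 2 * (1 + s^2) := by
    have : ‖s‖^2 = s^2 := by rw [Real.norm_eq_abs, sq_abs]
    nlinarith [norm_nonneg s, sq_nonneg (1 - ‖s‖)]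
  have hB : ((1 + ‖s‖) : ℝ) ^ ((3:ℝ)/2) ≤ (2:ℝ) ^ ((3:ℝ)/4) * (1 + s^2) ^ ((3:ℝ)/4) := by
    have e1 : ((1 + ‖s‖) : ℝ) ^ ((3:ℝ)/2) = ((1 + ‖s‖)^2 : ℝ) ^ ((3:ℝ)/4) := by
      rw [← Real.rpow_natCast (1 + ‖s‖) 2, ← Real.rpow_mul h1.le]; norm_num
    rw [e1, ← Real.mul_rpow (by norm_num) h0.le]
    exact Real.rpow_le_rpow (by positivity) hsq (by norm_num)
  rw [Real.norm_eq_abs, abs_of_nonneg (Real.rpow_nonneg h0.le _)]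
  rw [Real.rpow_neg h0.le, Real.rpow_neg h1.le]
  rw [inv_eq_one_div, inv_eq_one_div, mul_one_div, div_le_div_iff₀ (by positivity) (by positivity)]
  calc (1:ℝ) * (1 + ‖s‖) ^ ((3:ℝ)/2) = (1 + ‖s‖) ^ ((3:ℝ)/2) := by ring
    _ ≤ (2:ℝ) ^ ((3:ℝ)/4) * (1 + s^2) ^ ((3:ℝ)/4) := hB

lemma K_nonneg : 0 ≤ Kc := integral_nonneg fun s => Real.rpow_nonneg (by positivity) _

lemma M_eq (x d : ℝ) (hd : d ≠ 0) (u : ℝ) :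
    ((u - x)^2 + d^2) ^ (-(3/4):ℝ)
      = (d^2) ^ (-(3/4):ℝ) * ((1:ℝ) + (d⁻¹ * (u - x))^2) ^ (-(3/4):ℝ) := by
  have hd2 : (0:ℝ) < d^2 := by positivity
  have h1 : (1:ℝ) + (d⁻¹ * (u - x))^2 = ((u - x)^2 + d^2) / d^2 := by
    field_simp; ring
  have hne : ((d^2 : ℝ)) ^ (-(3/4):ℝ) ≠ 0 := by positivity
  rw [h1, Real.div_rpow (by positivity) hd2.le, mul_comm, div_mul_cancel₀ _ hne]

lemma M_int (x d : ℝ) (hd : d ≠ 0) :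
    Integrable (fun u : ℝ => ((u - x)^2 + d^2) ^ (-(3/4):ℝ)) := by
  have h1 : Integrable (fun v : ℝ => ((1:ℝ) + (d⁻¹ * v)^2) ^ (-(3/4):ℝ)) :=
    (integrable_comp_mul_left_iff (fun s : ℝ => ((1:ℝ) + s^2) ^ (-(3/4):ℝ))
      (inv_ne_zero hd)).2 K_int
  have h2 := (h1.comp_sub_right x).const_mul ((d^2) ^ (-(3/4):ℝ))
  refine h2.congr (Filter.Eventually.of_forall fun u => ?_)
  exact (M_eq x d hd u).symm

lemma M_val (x d : ℝ) (hd : d ≠ 0) :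
    ∫ u : ℝ, ((u - x)^2 + d^2) ^ (-(3/4):ℝ) = Kc * |d| ^ (-(1/2):ℝ) := by
  have habs : (0:ℝ) < |d| := abs_pos.mpr hd
  calc ∫ u : ℝ, ((u - x)^2 + d^2) ^ (-(3/4):ℝ)
      = ∫ u : ℝ, (d^2) ^ (-(3/4):ℝ) * ((1:ℝ) + (d⁻¹ * (u - x))^2) ^ (-(3/4):ℝ) := by
        congr 1; ext u; exact M_eq x d hd u
    _ = (d^2) ^ (-(3/4):ℝ) * ∫ u : ℝ, ((1:ℝ) + (d⁻¹ * (u - x))^2) ^ (-(3/4):ℝ) :=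
        integral_const_mul _ _
    _ = (d^2) ^ (-(3/4):ℝ) * ∫ v : ℝ, ((1:ℝ) + (d⁻¹ * v)^2) ^ (-(3/4):ℝ) := by
        rw [integral_sub_right_eq_self (fun v : ℝ => ((1:ℝ) + (d⁻¹ * v)^2) ^ (-(3/4):ℝ)) x]
    _ = (d^2) ^ (-(3/4):ℝ) * (|d| * Kc) := by
        rw [Measure.integral_comp_mul_left
          (fun s : ℝ => ((1:ℝ) + s^2) ^ (-(3/4):ℝ)) d⁻¹]
        simp [Kc, inv_inv, smul_eq_mul]
    _ = Kc * |d| ^ (-(1/2):ℝ) := by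
        have e1 : ((d:ℝ)^2) ^ (-(3/4):ℝ) = |d| ^ (-(3/2):ℝ) := by
          rw [← sq_abs, ← Real.rpow_natCast |d| 2, ← Real.rpow_mul habs.le]
          norm_num
        have e2 : |d| ^ (-(3/2):ℝ) * |d| = |d| ^ (-(1/2):ℝ) := by
          rw [← Real.rpow_add_one habs.ne']
          norm_num
        rw [e1, ← mul_assoc, e2]
        ring

lemma exp_int (c : ℝ) (hc : 0 < c) :
    ∫ v in Ioi (0:ℝ), Real.exp (-(c*v)) = c⁻¹ := by
  have key : ∫ v in Ioi (0:ℝ), Real.exp (-(c*v))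
      = 0 - (-c⁻¹ * Real.exp (-(c*0))) := by
    apply integral_Ioi_of_hasDerivAt_of_tendsto'
      (f := fun v : ℝ => -c⁻¹ * Real.exp (-(c*v)))
    · intro x _
      have h1 : HasDerivAt (fun v : ℝ => -(c*v)) (-c) x := by
        have := ((hasDerivAt_id' x).const_mul c).neg
        rw [mul_one] at this
        exact this
      have h2 : HasDerivAt (fun v : ℝ => Real.exp (-(c*v)))
          (Real.exp (-(c*x)) * -c) x := (Real.hasDerivAt_exp _).comp x h1
      have h3 := h2.const_mul (-c⁻¹)
      rw [show -c⁻¹ * (Real.exp (-(c*x)) * -c) = Real.exp (-(c*x)) * (c * c⁻¹) by ring,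
        mul_inv_cancel₀ hc.ne', mul_one] at h3
      exact h3
    · simpa [neg_mul] using exp_neg_integrableOn_Ioi 0 hc
    · have h4 : Tendsto (fun v : ℝ => -(c*v)) atTop atBot := by
        apply tendsto_neg_atTop_atBot.comp
        exact Tendsto.const_mul_atTop hc tendsto_id
      have h5 : Tendsto (fun v : ℝ => Real.exp (-(c*v))) atTop (nhds 0) :=
        Real.tendsto_exp_atBot.comp h4
      simpa using h5.const_mul (-c⁻¹)
  simpa using key

lemma negrpow_zero_of_neg {w : ℝ} (hw : w < 0) : w ^ (-(1/2):ℝ) = 0 := by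
  rw [Real.rpow_def_of_neg hw]
  have : Real.cos (-(1/2) * π) = 0 := by
    rw [show (-(1/2) * π : ℝ) = -(π/2) by ring, Real.cos_neg, Real.cos_pi_div_two]
  rw [this, mul_zero]

lemma abs_rpow_split (w : ℝ) :
    |w| ^ (-(1/2):ℝ) = w ^ (-(1/2):ℝ) + (-w) ^ (-(1/2):ℝ) := by
  rcases lt_trichotomy w 0 with h | h | h
  · rw [abs_of_neg h, negrpow_zero_of_neg h, zero_add]
  · simp [h, Real.zero_rpow (by norm_num : (-(1/2):ℝ) ≠ 0)]
  · rw [abs_of_pos h, negrpow_zero_of_neg (by linarith : -w < 0), add_zero]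

lemma absJ (δ : ℝ) :
    IntervalIntegrable (fun w : ℝ => |w| ^ (-(1/2):ℝ)) volume (-δ) δ := by
  have h1 : IntervalIntegrable (fun w : ℝ => w ^ (-(1/2):ℝ)) volume (-δ) δ :=
    intervalIntegral.intervalIntegrable_rpow' (by norm_num)
  have h2 : IntervalIntegrable (fun w : ℝ => (-w) ^ (-(1/2):ℝ)) volume (-δ) δ := by
    have := (intervalIntegral.intervalIntegrable_rpow'
      (a := δ) (b := -δ) (r := -(1/2)) (by norm_num))
    simpa using (IntervalIntegrable.iff_comp_neg (f := fun w : ℝ => w ^ (-(1/2):ℝ))).mp this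
  have hfe : (fun w : ℝ => |w| ^ (-(1/2):ℝ))
      = fun w : ℝ => w ^ (-(1/2):ℝ) + (-w) ^ (-(1/2):ℝ) := funext abs_rpow_split
  rw [hfe]; exact h1.add h2

lemma absJ_val (δ : ℝ) (hδ : 0 < δ) :
    ∫ w in (-δ)..δ, |w| ^ (-(1/2):ℝ) = 4 * δ ^ ((1:ℝ)/2) := by
  have h1 : IntervalIntegrable (fun w : ℝ => w ^ (-(1/2):ℝ)) volume (-δ) δ :=
    intervalIntegral.intervalIntegrable_rpow' (by norm_num)
  have h2 : IntervalIntegrable (fun w : ℝ => (-w) ^ (-(1/2):ℝ)) volume (-δ) δ := by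
    have := (intervalIntegral.intervalIntegrable_rpow'
      (a := δ) (b := -δ) (r := -(1/2)) (by norm_num))
    simpa using (IntervalIntegrable.iff_comp_neg (f := fun w : ℝ => w ^ (-(1/2):ℝ))).mp this
  have hval : ∫ w in (-δ)..δ, w ^ (-(1/2):ℝ) = 2 * δ ^ ((1:ℝ)/2) := by
    rw [integral_rpow (Or.inl (by norm_num))]
    have e : (-δ : ℝ) ^ (-(1/2)+1 : ℝ) = 0 := by
      rw [show (-(1/2)+1 : ℝ) = 1/2 by norm_num, Real.rpow_def_of_neg (by linarith)]
      rw [show ((1:ℝ)/2 * π) = π/2 by ring, Real.cos_pi_div_two, mul_zero]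
    rw [e, show (-(1/2)+1 : ℝ) = 1/2 by norm_num]
    ring
  have hval2 : ∫ w in (-δ)..δ, (-w) ^ (-(1/2):ℝ) = 2 * δ ^ ((1:ℝ)/2) := by
    rw [show (∫ w in (-δ)..δ, (-w) ^ (-(1/2):ℝ))
        = ∫ w in (-δ)..δ, w ^ (-(1/2):ℝ) by
      simpa using intervalIntegral.integral_comp_neg
        (a := -δ) (b := δ) (fun w : ℝ => w ^ (-(1/2):ℝ))]
    exact hval
  have hfe : (fun w : ℝ => |w| ^ (-(1/2):ℝ))
      = fun w : ℝ => w ^ (-(1/2):ℝ) + (-w) ^ (-(1/2):ℝ) := funext abs_rpow_split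
  rw [hfe, intervalIntegral.integral_add h1 h2, hval, hval2]
  ring

lemma outerL (c y : ℝ) (hc : 0 < c) :
    IntegrableOn (fun v => Real.exp (-(c*v)) * |v - y| ^ (-(1/2):ℝ)) (Ioi (0:ℝ)) ∧
    (∫ v in Ioi (0:ℝ), Real.exp (-(c*v)) * |v - y| ^ (-(1/2):ℝ))
      ≤ 5 * c ^ (-(1/2):ℝ) := by
  set δ : ℝ := c⁻¹ with hδdef
  have hδ : 0 < δ := inv_pos.mpr hc
  -- ψ₁ : singular part
  set ψ₁ : ℝ → ℝ := (Icc (y - δ) (y + δ)).indicator (fun v => |v - y| ^ (-(1/2):ℝ))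
    with hψ₁def
  set ψ₂ : ℝ → ℝ := fun v => δ ^ (-(1/2):ℝ) * Real.exp (-(c*v)) with hψ₂def
  -- integrability of the translated singular kernel on the Icc
  have hJ : IntegrableOn (fun v : ℝ => |v - y| ^ (-(1/2):ℝ)) (Icc (y - δ) (y + δ)) := by
    have h1 := (absJ δ).comp_sub_right y
    have h2 : IntervalIntegrable (fun v : ℝ => |v - y| ^ (-(1/2):ℝ))
        volume (y - δ) (y + δ) := by
      have : (-δ + y) = y - δ := by ring
      have h3 : (δ + y) = y + δ := by ring
      rwa [this, h3] at h1
    exact (intervalIntegrable_iff_integrableOn_Icc_of_le (by linarith)).mp h2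
  have hψ₁int : Integrable ψ₁ := by
    rw [hψ₁def, integrable_indicator_iff measurableSet_Icc]
    exact hJ
  have hψ₁nonneg : ∀ v, 0 ≤ ψ₁ v := fun v =>
    Set.indicator_nonneg (fun x _ => Real.rpow_nonneg (abs_nonneg _) _) v
  have hψ₂int : IntegrableOn ψ₂ (Ioi (0:ℝ)) := by
    have := (exp_neg_integrableOn_Ioi 0 hc).const_mul (δ ^ (-(1/2):ℝ))
    simpa [hψ₂def, neg_mul, IntegrableOn] using this
  have hψint : IntegrableOn (fun v => ψ₁ v + ψ₂ v) (Ioi (0:ℝ)) :=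
    (hψ₁int.integrableOn).add hψ₂int
  -- pointwise bound on Ioi 0
  have hpt : ∀ v ∈ Ioi (0:ℝ),
      Real.exp (-(c*v)) * |v - y| ^ (-(1/2):ℝ) ≤ ψ₁ v + ψ₂ v := by
    intro v hv
    have hv0 : (0:ℝ) < v := hv
    have hexp1 : Real.exp (-(c*v)) ≤ 1 :=
      Real.exp_le_one_iff.mpr (by nlinarith)
    rcases le_or_gt |v - y| δ with h | h
    · have hmem : v ∈ Icc (y - δ) (y + δ) := by
        rcases abs_le.mp h with ⟨h1, h2⟩
        constructor <;> linarith
      have : ψ₁ v = |v - y| ^ (-(1/2):ℝ) := by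
        rw [hψ₁def, Set.indicator_of_mem hmem]
      rw [this]
      have h2 : Real.exp (-(c*v)) * |v - y| ^ (-(1/2):ℝ) ≤ |v - y| ^ (-(1/2):ℝ) := by
        nlinarith [Real.rpow_nonneg (abs_nonneg (v - y)) (-(1/2):ℝ),
          Real.exp_pos (-(c*v))]
      have h3 : 0 ≤ ψ₂ v := by
        rw [hψ₂def]
        positivity
      linarith
    · have hb : |v - y| ^ (-(1/2):ℝ) ≤ δ ^ (-(1/2):ℝ) :=
        Real.rpow_le_rpow_of_nonpos hδ h.le (by norm_num)
      have h2 : Real.exp (-(c*v)) * |v - y| ^ (-(1/2):ℝ)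
          ≤ δ ^ (-(1/2):ℝ) * Real.exp (-(c*v)) := by
        rw [mul_comm]
        exact mul_le_mul_of_nonneg_right hb (Real.exp_pos _).le
      have h3 : 0 ≤ ψ₁ v := hψ₁nonneg v
      simp only [hψ₂def]
      linarith
  constructor
  · -- integrability
    have hmeas : AEStronglyMeasurable
        (fun v => Real.exp (-(c*v)) * |v - y| ^ (-(1/2):ℝ))
        (volume.restrict (Ioi (0:ℝ))) := by
      apply AEStronglyMeasurable.mul
      · exact (Real.continuous_exp.comp (by continuity)).aestronglyMeasurable
      · exact (((measurable_id.sub_const y).abs.pow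
          measurable_const).aestronglyMeasurable)
    refine hψint.mono' hmeas ?_
    rw [ae_restrict_iff' measurableSet_Ioi]
    filter_upwards with v hv
    rw [Real.norm_eq_abs, abs_of_nonneg (by positivity)]
    exact hpt v hv
  · -- integral bound
    have hmono : (∫ v in Ioi (0:ℝ), Real.exp (-(c*v)) * |v - y| ^ (-(1/2):ℝ))
        ≤ ∫ v in Ioi (0:ℝ), (ψ₁ v + ψ₂ v) := by
      apply integral_mono_of_nonneg
      · filter_upwards with v; positivity
      · exact hψint
      · exact (ae_restrict_iff' measurableSet_Ioi).mpr
          (Filter.Eventually.of_forall fun v hv => hpt v hv)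
    have hsplit : ∫ v in Ioi (0:ℝ), (ψ₁ v + ψ₂ v)
        = (∫ v in Ioi (0:ℝ), ψ₁ v) + ∫ v in Ioi (0:ℝ), ψ₂ v :=
      integral_add hψ₁int.integrableOn hψ₂int
    have hI1 : (∫ v in Ioi (0:ℝ), ψ₁ v) ≤ 4 * c ^ (-(1/2):ℝ) := by
      have h1 : (∫ v in Ioi (0:ℝ), ψ₁ v) ≤ ∫ v, ψ₁ v :=
        setIntegral_le_integral hψ₁int (Filter.Eventually.of_forall hψ₁nonneg)
      have h2 : (∫ v, ψ₁ v) = ∫ v in Icc (y - δ) (y + δ), |v - y| ^ (-(1/2):ℝ) := by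
        rw [hψ₁def, integral_indicator measurableSet_Icc]
      have h3 : (∫ v in Icc (y - δ) (y + δ), |v - y| ^ (-(1/2):ℝ))
          = ∫ v in (y - δ)..(y + δ), |v - y| ^ (-(1/2):ℝ) := by
        rw [intervalIntegral.integral_of_le (by linarith), integral_Icc_eq_integral_Ioc]
      have h4 : (∫ v in (y - δ)..(y + δ), |v - y| ^ (-(1/2):ℝ))
          = ∫ w in (-δ)..δ, |w| ^ (-(1/2):ℝ) := by
        have := intervalIntegral.integral_comp_sub_right
          (a := y - δ) (b := y + δ) (fun w : ℝ => |w| ^ (-(1/2):ℝ)) y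
        simpa [sub_sub_cancel_left, add_sub_cancel_left] using this
      have h5 : δ ^ ((1:ℝ)/2) = c ^ (-(1/2):ℝ) := by
        rw [hδdef, ← Real.rpow_neg_one c, ← Real.rpow_mul hc.le]
        norm_num
      rw [h2, h3, h4, absJ_val δ hδ, h5] at h1
      exact h1
    have hI2 : (∫ v in Ioi (0:ℝ), ψ₂ v) = c ^ (-(1/2):ℝ) := by
      rw [hψ₂def, integral_const_mul, exp_int c hc]
      rw [hδdef, ← Real.rpow_neg_one c, ← Real.rpow_mul hc.le, ← Real.rpow_add hc]
      norm_num
    calc (∫ v in Ioi (0:ℝ), Real.exp (-(c*v)) * |v - y| ^ (-(1/2):ℝ))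
        ≤ (∫ v in Ioi (0:ℝ), ψ₁ v) + ∫ v in Ioi (0:ℝ), ψ₂ v := by
          rw [← hsplit]; exact hmono
      _ ≤ 4 * c ^ (-(1/2):ℝ) + c ^ (-(1/2):ℝ) := by
          rw [hI2]; linarith
      _ = 5 * c ^ (-(1/2):ℝ) := by ring
/-- Appendix-B estimate for `I₃` (equation (B.6)): for every `ε > 0` there is `C > 0`
such that for all `z₀ > 0`, `t ≥ 1` and all `z ∈ ℂ`,
`∫_0^∞ ∫_{v+z₀}^∞ ((u − z₀)² + v²)^{−1/4} e^{−tεv/2} / |u + iv − z| du dv ≤ C t^{−1/2}`. -/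
theorem stmt_19 :
    ∀ ε > (0 : ℝ), ∃ C > (0 : ℝ), ∀ z₀ > (0 : ℝ), ∀ t ≥ (1 : ℝ), ∀ z : ℂ,
      (∫ v in Set.Ioi (0 : ℝ), ∫ u in Set.Ioi (v + z₀),
          ((u - z₀) ^ 2 + v ^ 2) ^ (-(1 / 4) : ℝ) * Real.exp (-(t * ε * v / 2)) /
            ‖(u : ℂ) + (v : ℂ) * Complex.I - z‖) ≤
        C * t ^ (-(1 / 2) : ℝ) := by
  intro ε hε
  have hCpos : (0:ℝ) < 10 * Kc * ((ε/2) ^ (-(1/2):ℝ)) + 1 := by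
    have := mul_nonneg (mul_nonneg (by norm_num : (0:ℝ) ≤ 10) K_nonneg)
      (Real.rpow_nonneg (by positivity : (0:ℝ) ≤ ε/2) (-(1/2):ℝ))
    linarith
  refine ⟨10 * Kc * ((ε/2) ^ (-(1/2):ℝ)) + 1, hCpos, ?_⟩
  intro z₀ hz₀ t ht z
  have ht0 : (0:ℝ) < t := lt_of_lt_of_le one_pos ht
  set x : ℝ := z.re with hx
  set y : ℝ := z.im with hy
  set c : ℝ := t * ε / 2 with hc
  have hcpos : 0 < c := by rw [hc]; positivity
  have hexp : ∀ v : ℝ, -(t * ε * v / 2) = -(c * v) := fun v => by rw [hc]; ring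
  simp only [hexp]
  -- absolute value as a square root
  have habs : ∀ u v : ℝ, ‖(u:ℂ) + (v:ℂ) * Complex.I - z‖
      = Real.sqrt ((u - x)^2 + (v - y)^2) := by
    intro u v
    rw [Complex.norm_def, Complex.normSq_apply]
    congr 1
    simp [Complex.sub_re, Complex.add_re, Complex.sub_im, Complex.add_im,
      Complex.mul_re, Complex.mul_im]
    ring
  -- inner bound
  have inner_bound : ∀ v : ℝ, 0 < v → v ≠ y →
      (∫ u in Set.Ioi (v + z₀), ((u - z₀) ^ 2 + v ^ 2) ^ (-(1 / 4) : ℝ)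
          * Real.exp (-(c * v)) / ‖(u : ℂ) + (v : ℂ) * Complex.I - z‖)
        ≤ Kc * (Real.exp (-(c * v)) * |v - 0| ^ (-(1/2):ℝ))
          + Kc * (Real.exp (-(c * v)) * |v - y| ^ (-(1/2):ℝ)) := by
    intro v hv hvy
    have hvne : v ≠ 0 := hv.ne'
    have hdne : v - y ≠ 0 := sub_ne_zero.mpr hvy
    set E : ℝ := Real.exp (-(c * v)) with hE
    have hP1 : Integrable (fun u : ℝ => E * ((u - z₀)^2 + v^2) ^ (-(3/4):ℝ)) :=
      (M_int z₀ v hvne).const_mul E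
    have hP2 : Integrable (fun u : ℝ => E * ((u - x)^2 + (v - y)^2) ^ (-(3/4):ℝ)) :=
      (M_int x (v - y) hdne).const_mul E
    have hmono : (∫ u in Set.Ioi (v + z₀), ((u - z₀) ^ 2 + v ^ 2) ^ (-(1 / 4) : ℝ)
          * E / ‖(u : ℂ) + (v : ℂ) * Complex.I - z‖)
        ≤ ∫ u in Set.Ioi (v + z₀),
            (E * ((u - z₀)^2 + v^2) ^ (-(3/4):ℝ)
              + E * ((u - x)^2 + (v - y)^2) ^ (-(3/4):ℝ)) := by
      apply integral_mono_of_nonneg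
      · filter_upwards with u; positivity
      · exact (hP1.add hP2).integrableOn
      · filter_upwards with u
        rw [habs u v]
        exact pw ((u - z₀)^2 + v^2) ((u - x)^2 + (v - y)^2) E
          (by positivity) (by positivity) (Real.exp_nonneg _)
    calc (∫ u in Set.Ioi (v + z₀), ((u - z₀) ^ 2 + v ^ 2) ^ (-(1 / 4) : ℝ)
          * E / ‖(u : ℂ) + (v : ℂ) * Complex.I - z‖)
        ≤ ∫ u in Set.Ioi (v + z₀),
            (E * ((u - z₀)^2 + v^2) ^ (-(3/4):ℝ)
              + E * ((u - x)^2 + (v - y)^2) ^ (-(3/4):ℝ)) := hmono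
      _ = (∫ u in Set.Ioi (v + z₀), E * ((u - z₀)^2 + v^2) ^ (-(3/4):ℝ))
            + ∫ u in Set.Ioi (v + z₀), E * ((u - x)^2 + (v - y)^2) ^ (-(3/4):ℝ) :=
          integral_add hP1.integrableOn hP2.integrableOn
      _ ≤ (∫ u : ℝ, E * ((u - z₀)^2 + v^2) ^ (-(3/4):ℝ))
            + ∫ u : ℝ, E * ((u - x)^2 + (v - y)^2) ^ (-(3/4):ℝ) := by
          apply add_le_add
          · exact setIntegral_le_integral hP1
              (Filter.Eventually.of_forall fun u => by positivity)
          · exact setIntegral_le_integral hP2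
              (Filter.Eventually.of_forall fun u => by positivity)
      _ = E * (Kc * |v| ^ (-(1/2):ℝ)) + E * (Kc * |v - y| ^ (-(1/2):ℝ)) := by
          rw [integral_const_mul, integral_const_mul, M_val z₀ v hvne, M_val x (v - y) hdne]
      _ = Kc * (E * |v - 0| ^ (-(1/2):ℝ)) + Kc * (E * |v - y| ^ (-(1/2):ℝ)) := by
          rw [sub_zero]; ring
  -- outer estimate
  have houter1 := outerL c 0 hcpos
  have houter2 := outerL c y hcpos
  have hh1 : IntegrableOn
      (fun v => Kc * (Real.exp (-(c * v)) * |v - 0| ^ (-(1/2):ℝ))) (Set.Ioi (0:ℝ)) :=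
    houter1.1.const_mul Kc
  have hh2 : IntegrableOn
      (fun v => Kc * (Real.exp (-(c * v)) * |v - y| ^ (-(1/2):ℝ))) (Set.Ioi (0:ℝ)) :=
    houter2.1.const_mul Kc
  have hmain : (∫ v in Set.Ioi (0:ℝ), ∫ u in Set.Ioi (v + z₀),
        ((u - z₀) ^ 2 + v ^ 2) ^ (-(1 / 4) : ℝ) * Real.exp (-(c * v))
          / ‖(u : ℂ) + (v : ℂ) * Complex.I - z‖)
      ≤ ∫ v in Set.Ioi (0:ℝ),
          (Kc * (Real.exp (-(c * v)) * |v - 0| ^ (-(1/2):ℝ))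
            + Kc * (Real.exp (-(c * v)) * |v - y| ^ (-(1/2):ℝ))) := by
    apply integral_mono_of_nonneg
    · filter_upwards with v
      exact integral_nonneg fun u => by positivity
    · exact hh1.add hh2
    · have h1 : ∀ᵐ v ∂(volume.restrict (Set.Ioi (0:ℝ))), v ∈ Set.Ioi (0:ℝ) :=
        ae_restrict_mem measurableSet_Ioi
      have h2 : ∀ᵐ v ∂(volume.restrict (Set.Ioi (0:ℝ))), v ≠ y := by
        refine ae_restrict_of_ae ?_
        rw [ae_iff]
        have : {v : ℝ | ¬ v ≠ y} = {y} := by ext v; simp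
        rw [this]
        exact Real.volume_singleton
      filter_upwards [h1, h2] with v hv hvy
      exact inner_bound v hv hvy
  have hsum : (∫ v in Set.Ioi (0:ℝ),
        (Kc * (Real.exp (-(c * v)) * |v - 0| ^ (-(1/2):ℝ))
          + Kc * (Real.exp (-(c * v)) * |v - y| ^ (-(1/2):ℝ))))
      ≤ 10 * Kc * c ^ (-(1/2):ℝ) := by
    rw [integral_add hh1 hh2, integral_const_mul, integral_const_mul]
    have b1 := mul_le_mul_of_nonneg_left houter1.2 K_nonneg
    have b2 := mul_le_mul_of_nonneg_left houter2.2 K_nonneg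
    calc Kc * (∫ v in Set.Ioi (0:ℝ), Real.exp (-(c * v)) * |v - 0| ^ (-(1/2):ℝ))
          + Kc * (∫ v in Set.Ioi (0:ℝ), Real.exp (-(c * v)) * |v - y| ^ (-(1/2):ℝ))
        ≤ Kc * (5 * c ^ (-(1/2):ℝ)) + Kc * (5 * c ^ (-(1/2):ℝ)) := add_le_add b1 b2
      _ = 10 * Kc * c ^ (-(1/2):ℝ) := by ring
  have hfinal : 10 * Kc * c ^ (-(1/2):ℝ)
      ≤ (10 * Kc * ((ε/2) ^ (-(1/2):ℝ)) + 1) * t ^ (-(1/2):ℝ) := by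
    have hce : c = t * (ε/2) := by rw [hc]; ring
    have : c ^ (-(1/2):ℝ) = t ^ (-(1/2):ℝ) * (ε/2) ^ (-(1/2):ℝ) := by
      rw [hce, Real.mul_rpow ht0.le (by positivity)]
    rw [this]
    have htp : (0:ℝ) < t ^ (-(1/2):ℝ) := Real.rpow_pos_of_pos ht0 _
    nlinarith [K_nonneg, Real.rpow_nonneg (show (0:ℝ) ≤ ε/2 by positivity) (-(1/2):ℝ)]
  calc (∫ v in Set.Ioi (0:ℝ), ∫ u in Set.Ioi (v + z₀),
        ((u - z₀) ^ 2 + v ^ 2) ^ (-(1 / 4) : ℝ) * Real.exp (-(c * v))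
          / ‖(u : ℂ) + (v : ℂ) * Complex.I - z‖)
      ≤ 10 * Kc * c ^ (-(1/2):ℝ) := le_trans hmain hsum
    _ ≤ (10 * Kc * ((ε/2) ^ (-(1/2):ℝ)) + 1) * t ^ (-(1/2):ℝ) := hfinal
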